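/- arXiv:1506.05737 — 3 statements merged into one kernel-verified Lean document; each statement's English description precedes it below -/
import Mathlib

section
/- Let G be a group of order p(p+1) with p prime, and suppose G has a Sylow p-subgroup P whose normalizer is P itself. Then the set K = (G \ ⋃_{g∈G} P^g) ∪ {1} has exactly p+1 elements. -/
open Subgroup Pointwise

theorem frobenius_kernel_card (p : ℕ) [Fact p.Prime] (G : Type*) [Group G] [Fintype G]
    (hG : Fintype.card G = p * (p + 1)) (P : Sylow p G)
    (hnorm : Subgroup.normalizer ((P : Subgroup G) : Set G) = P) :
    Set.ncard {x : G | x = 1 ∨ ∀ g : G, ∀ h ∈ (P : Subgroup G), x ≠ g⁻¹ * h * g}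
      = p + 1 := by
  classical
  have hp := (Fact.out : p.Prime)
  have hcardG : Nat.card G = p * (p + 1) := by rw [Nat.card_eq_fintype_card, hG]
  -- card of each Sylow is p
  have hfact : (Nat.card G).factorization p = 1 := by
    rw [hcardG, Nat.factorization_mul hp.pos.ne' (by omega)]
    have h1 : p.factorization p = 1 := Nat.Prime.factorization_self hp
    have h2 : (p + 1).factorization p = 0 := by
      apply Nat.factorization_eq_zero_of_not_dvd
      intro h
      have h1 : p ∣ 1 := (Nat.dvd_add_right dvd_rfl).mp h
      exact hp.one_lt.ne' (Nat.dvd_one.mp h1)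
    simp [h1, h2]
  have hcardQ : ∀ Q : Sylow p G, Nat.card Q = p := by
    intro Q
    rw [Q.card_eq_multiplicity, hfact, pow_one]
  -- trivial pairwise intersections
  have hdisj : ∀ Q R : Sylow p G, Q ≠ R → ∀ x : G, x ∈ (Q : Subgroup G) →
      x ∈ (R : Subgroup G) → x = 1 := by
    intro Q R hne x hxQ hxR
    by_contra hx1
    have horder : orderOf x = p := by
      have hdvd : orderOf x ∣ p := by
        have : orderOf x ∣ Nat.card (Q : Subgroup G) := by
          rw [← Nat.card_zpowers]
          exact Subgroup.card_dvd_of_le ((zpowers_le).mpr hxQ)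
        rwa [hcardQ Q] at this
      rcases (Nat.dvd_prime hp).mp hdvd with h | h
      · exact absurd (orderOf_eq_one_iff.mp h) hx1
      · exact h
    have hQ : zpowers x = (Q : Subgroup G) := by
      apply Subgroup.eq_of_le_of_card_ge ((zpowers_le).mpr hxQ)
      rw [hcardQ Q, Nat.card_zpowers, horder]
    have hR : zpowers x = (R : Subgroup G) := by
      apply Subgroup.eq_of_le_of_card_ge ((zpowers_le).mpr hxR)
      rw [hcardQ R, Nat.card_zpowers, horder]
    exact hne (Sylow.ext (hQ ▸ hR))
  -- the target set is the complement of S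
  set S : Set G := {x : G | x ≠ 1 ∧ ∃ Q : Sylow p G, x ∈ (Q : Subgroup G)} with hS
  have hset : {x : G | x = 1 ∨ ∀ g : G, ∀ h ∈ (P : Subgroup G), x ≠ g⁻¹ * h * g} = Sᶜ := by
    ext x
    simp only [Set.mem_setOf_eq, Set.mem_compl_iff, hS, not_and, not_exists]
    constructor
    · rintro (rfl | hx)
      · intro h; exact absurd rfl h
      · intro hx1 Q hxQ
        obtain ⟨g, hg⟩ := MulAction.exists_smul_eq G P Q
        rw [← hg] at hxQ
        have : x ∈ MulAut.conj g • (P : Subgroup G) := hxQ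
        rw [Subgroup.mem_pointwise_smul_iff_inv_smul_mem] at this
        have hconv : (MulAut.conj g)⁻¹ • x = g⁻¹ * x * g := by
          rw [MulAut.smul_def, MulAut.conj_inv_apply]
        exact hx g⁻¹ _ this (by rw [hconv]; group)
    · intro h
      by_cases hx1 : x = 1
      · exact Or.inl hx1
      · refine Or.inr fun g h' hh' hx => ?_
        refine h hx1 (g⁻¹ • P) ?_
        show x ∈ MulAut.conj g⁻¹ • (P : Subgroup G)
        rw [Subgroup.mem_pointwise_smul_iff_inv_smul_mem]
        have hconv : (MulAut.conj g⁻¹)⁻¹ • x = g * x * g⁻¹ := by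
          rw [MulAut.smul_def, MulAut.conj_inv_apply]; group
        rw [hconv, hx]
        convert hh' using 1
        group
    -- card of S
  have hScard : S.ncard = (p + 1) * (p - 1) := by
    have hSeq : S.toFinset =
        Finset.univ.biUnion (fun Q : Sylow p G =>
          ((Q : Subgroup G) : Set G).toFinset \ {1}) := by
      ext x
      simp only [Set.mem_toFinset, hS, Set.mem_setOf_eq, Finset.mem_biUnion, Finset.mem_univ,
        Finset.mem_sdiff, Finset.mem_singleton, true_and]
      tauto
    rw [Set.ncard_eq_toFinset_card', hSeq, Finset.card_biUnion]
    · have hcard1 : ∀ Q : Sylow p G,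
          (((Q : Subgroup G) : Set G).toFinset \ {1}).card = p - 1 := by
        intro Q
        rw [Finset.card_sdiff_of_subset (by simp [Subgroup.one_mem])]
        simp only [Finset.card_singleton, Set.toFinset_card]
        rw [show Fintype.card ((Q : Subgroup G) : Set G) = Nat.card Q from
          (Nat.card_eq_fintype_card).symm, hcardQ Q]
      simp only [hcard1, Finset.sum_const, Finset.card_univ, smul_eq_mul]
      congr 1
      -- number of Sylow subgroups is p + 1
      have := Sylow.card_eq_index_normalizer P
      rw [show Subgroup.normalizer (P : Set G) = P from hnorm] at this
      have hidx : Nat.card (P : Subgroup G) * ((P : Subgroup G)).index = Nat.card G :=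
        Subgroup.card_mul_index _
      rw [hcardQ P, hcardG] at hidx
      have : Nat.card (Sylow p G) = p + 1 := by
        rw [this]
        exact Nat.eq_of_mul_eq_mul_left hp.pos hidx
      rw [← Nat.card_eq_fintype_card, this]
    · intro Q _ R _ hne
      simp only [Finset.disjoint_left, Finset.mem_sdiff, Set.mem_toFinset, Finset.mem_singleton]
      rintro x ⟨hxQ, hx1⟩ ⟨hxR, -⟩
      exact hx1 (hdisj Q R hne x hxQ hxR)
  rw [hset]
  have := Set.ncard_add_ncard_compl S
  rw [hScard, Nat.card_eq_fintype_card, hG] at this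
  have hp1 : 1 ≤ p := hp.one_le
  have key : (p + 1) * (p - 1) + (p + 1) = p * (p + 1) := by
    obtain ⟨k, rfl⟩ := Nat.exists_eq_add_of_le hp1
    have hk : 1 + k - 1 = k := by omega
    rw [hk]; ring
  omega
end

section
/- Let G be a finite group that is a semidirect product K ⋊ P where K is elementary abelian of order 2^n and P is cyclic of order 2^n − 1 acting on K with no nontrivial fixed points. Then G is isomorphic to the affine group AGL(1, 2^n) = 𝔽_{2^n} ⋊ 𝔽_{2^n}^×. -/
/-- The map turning additive automorphisms into multiplicative automorphisms of
`Multiplicative A`. -/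
def addAutToMulAut (A : Type*) [AddGroup A] :
    Multiplicative (AddAut A) →* MulAut (Multiplicative A) where
  toFun e := AddEquiv.toMultiplicative e.toAdd
  map_one' := rfl
  map_mul' := fun _ _ => rfl

/-- The natural action of `𝔽_{2^n}ˣ` on the additive group of `𝔽_{2^n}` by multiplication,
used to form `AGL(1, 2^n) = 𝔽_{2^n} ⋊ 𝔽_{2^n}ˣ`. -/
noncomputable def aglAction (n : ℕ) :
    (GaloisField 2 n)ˣ →* MulAut (Multiplicative (GaloisField 2 n)) :=
  (addAutToMulAut _).comp (DistribMulAction.toAddAut _ _)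

theorem iso_AGL_one (n : ℕ) (hn : 0 < n)
    (K : Type*) [CommGroup K] [Fintype K] (hK : Fintype.card K = 2 ^ n)
    (hK2 : ∀ x : K, x ^ 2 = 1)
    (P : Type*) [Group P] [Fintype P] (hPcyc : IsCyclic P)
    (hP : Fintype.card P = 2 ^ n - 1)
    (φ : P →* MulAut K)
    (hfix : ∀ p : P, p ≠ 1 → ∀ k : K, φ p k = k → k = 1) :
    Nonempty ((K ⋊[φ] P) ≃*
      (Multiplicative (GaloisField 2 n) ⋊[aglAction n] (GaloisField 2 n)ˣ)) := by
  classical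
  haveI := hPcyc
  have Pcomm : ∀ p q : P, p * q = q * p := fun p q => by
    letI := IsCyclic.commGroup (α := P); exact mul_comm p q
  have hcard2 : (1 : ℕ) < Fintype.card K := by
    rw [hK]; exact Nat.one_lt_two_pow (by omega)
  haveI : Nontrivial K := Fintype.one_lt_card_iff_nontrivial.mp hcard2
  obtain ⟨k₀, hk₀⟩ := exists_ne (1 : K)
  have hinv : ∀ a : K, a * a = 1 := fun a => by rw [← sq]; exact hK2 a
  have hne0 : ∀ p : P, φ p k₀ ≠ 1 := fun p h =>
    hk₀ ((φ p).injective (h.trans (map_one (φ p)).symm))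
  have hfinj : ∀ p q : P, φ p k₀ = φ q k₀ → p = q := by
    intro p q h
    by_contra hne
    have hne' : q⁻¹ * p ≠ 1 := fun h' => hne (inv_mul_eq_one.mp h').symm
    have h1 : φ (q⁻¹ * p) k₀ = k₀ := by
      have := congrArg (φ q⁻¹) h
      rwa [← MulAut.mul_apply, ← map_mul, ← MulAut.mul_apply, ← map_mul,
        inv_mul_cancel, map_one, MulAut.one_apply] at this
    exact hk₀ (hfix _ hne' k₀ h1)
  -- surjectivity onto nonidentity elements
  have hcard1 : Fintype.card {a : K // ¬ a = 1} = 2 ^ n - 1 := by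
    rw [Fintype.card_subtype_compl, Fintype.card_subtype_eq, hK]
  have hFbij : Function.Bijective
      (fun p : P => (⟨φ p k₀, hne0 p⟩ : {a : K // ¬ a = 1})) := by
    rw [Fintype.bijective_iff_injective_and_card]
    exact ⟨fun p q h => hfinj p q (congrArg Subtype.val h), by rw [hcard1, hP]⟩
  have hsurj : ∀ a : K, a ≠ 1 → ∃ p : P, φ p k₀ = a := by
    intro a ha
    obtain ⟨p, hp⟩ := hFbij.surjective ⟨a, ha⟩
    exact ⟨p, congrArg Subtype.val hp⟩
  -- lookup
  set lk : K → P := fun a => if h : a ≠ 1 then (hsurj a h).choose else 1 with hlkdef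
  have hlk : ∀ a, a ≠ 1 → φ (lk a) k₀ = a := fun a h => by
    simp only [hlkdef, dif_pos h]; exact (hsurj a h).choose_spec
  have hlk2 : ∀ p : P, lk (φ p k₀) = p := fun p => hfinj _ _ (hlk _ (hne0 p))
  -- the field multiplication
  set fmul : K → K → K := fun a b => if _ : a ≠ 1 then φ (lk a) b else 1 with hfmdef
  have hmulP : ∀ (p : P) (b : K), fmul (φ p k₀) b = φ p b := fun p b => by
    simp only [hfmdef, dif_pos (hne0 p), hlk2]
  have hmul0 : ∀ b, fmul 1 b = 1 := fun b => by simp [hfmdef]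
  have hmulr0 : ∀ a, fmul a 1 = 1 := fun a => by
    by_cases h : a ≠ 1
    · simp [hfmdef, dif_pos h]
    · simp [hfmdef, h]
  have hmulnn : ∀ a b, a ≠ 1 → b ≠ 1 → fmul a b = φ (lk a * lk b) k₀ := by
    intro a b ha hb
    simp only [hfmdef, dif_pos ha]
    conv_lhs => rw [← hlk b hb]
    rw [map_mul, MulAut.mul_apply]
  have hcomm : ∀ a b, fmul a b = fmul b a := by
    intro a b
    by_cases ha : a = 1
    · rw [ha, hmul0, hmulr0]
    · by_cases hb : b = 1
      · rw [hb, hmul0, hmulr0]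
      · rw [hmulnn a b ha hb, hmulnn b a hb ha, Pcomm]
  have hassoc : ∀ a b c, fmul (fmul a b) c = fmul a (fmul b c) := by
    intro a b c
    by_cases ha : a = 1
    · rw [ha, hmul0, hmul0, hmul0]
    · by_cases hb : b = 1
      · rw [hb, hmulr0 a, hmul0 c, hmulr0 a]
      · rw [← hlk a ha, ← hlk b hb, hmulP, hmulP, hmulP, ← MulAut.mul_apply,
          ← map_mul, hmulP, map_mul, MulAut.mul_apply]
  have hdistrib : ∀ a b c, fmul a (b * c) = fmul a b * fmul a c := by
    intro a b c
    by_cases ha : a = 1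
    · rw [ha, hmul0, hmul0, hmul0, one_mul]
    · simp only [hfmdef, dif_pos (show a ≠ 1 from ha), map_mul]
  have honemul : ∀ a, fmul k₀ a = a := fun a => by
    have : φ (1 : P) k₀ = k₀ := by rw [map_one]; rfl
    rw [← this, hmulP, map_one]; rfl
  -- the field structure on `Additive K`
  letI instF : Field (Additive K) :=
  { Additive.addCommGroup with
    mul := fun a b => Additive.ofMul (fmul a.toMul b.toMul)
    one := Additive.ofMul k₀
    mul_assoc := fun a b c => hassoc _ _ _
    one_mul := fun a => honemul _
    mul_one := fun a => (hcomm _ _).trans (honemul _)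
    left_distrib := fun a b c => hdistrib _ _ _
    right_distrib := fun a b c => by
      show fmul (a.toMul * b.toMul) c.toMul = fmul a.toMul c.toMul * fmul b.toMul c.toMul
      rw [hcomm (a.toMul * b.toMul) c.toMul, hdistrib, hcomm c.toMul a.toMul, hcomm c.toMul b.toMul]
    zero_mul := fun a => hmul0 _
    mul_zero := fun a => hmulr0 _
    mul_comm := fun a b => hcomm _ _
    inv := fun a => Additive.ofMul (if h : a.toMul ≠ 1 then φ (lk a.toMul)⁻¹ k₀ else 1)
    exists_pair_ne := ⟨Additive.ofMul 1, Additive.ofMul k₀, fun h => hk₀ h.symm⟩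
    mul_inv_cancel := fun a ha => by
      have ha' : a.toMul ≠ 1 := ha
      show fmul a.toMul (if h : a.toMul ≠ 1 then φ (lk a.toMul)⁻¹ k₀ else 1) = k₀
      rw [dif_pos ha']
      simp only [hfmdef, dif_pos ha']
      rw [← MulAut.mul_apply, ← map_mul, mul_inv_cancel, map_one, MulAut.one_apply]
    inv_zero := by
      show Additive.ofMul (if h : (1 : K) ≠ 1 then φ (lk 1)⁻¹ k₀ else 1) = Additive.ofMul 1
      simp
    nnqsmul := _
    qsmul := _ }
  letI : Fintype (Additive K) := ‹Fintype K›
  have hcardA : Fintype.card (Additive K) = 2 ^ n := hK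
  haveI : CharP (Additive K) 2 := by
    apply CharTwo.of_one_ne_zero_of_two_eq_zero
    · exact fun h => hk₀ h
    · have : (2 : Additive K) = 1 + 1 := by norm_num
      rw [this]
      show Additive.ofMul (k₀ * k₀) = Additive.ofMul 1
      rw [hinv]
  haveI := Fact.mk Nat.prime_two
  letI : Algebra (ZMod 2) (Additive K) := ZMod.algebra _ _
  letI : Fintype (GaloisField 2 n) := Fintype.ofFinite _
  let E : Additive K ≃+* GaloisField 2 n :=
    (GaloisField.algEquivGaloisFieldOfFintype 2 n hcardA).toRingEquiv
  -- the additive-group isomorphism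
  let ψ : K ≃* Multiplicative (GaloisField 2 n) :=
  { toFun := fun k => Multiplicative.ofAdd (E (Additive.ofMul k))
    invFun := fun x => (E.symm (Multiplicative.toAdd x)).toMul
    left_inv := fun k => by simp
    right_inv := fun x => by simp
    map_mul' := fun a b => by
      show Multiplicative.ofAdd (E (Additive.ofMul a + Additive.ofMul b)) = _
      rw [map_add]; rfl }
  -- the P-side homomorphism
  let uP : P →* (Additive K)ˣ :=
  { toFun := fun p =>
      ⟨Additive.ofMul (φ p k₀), Additive.ofMul (φ p⁻¹ k₀),
        by
          show Additive.ofMul (fmul (φ p k₀) (φ p⁻¹ k₀)) = Additive.ofMul k₀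
          rw [hmulP, ← MulAut.mul_apply, ← map_mul, mul_inv_cancel, map_one, MulAut.one_apply],
        by
          show Additive.ofMul (fmul (φ p⁻¹ k₀) (φ p k₀)) = Additive.ofMul k₀
          rw [hmulP, ← MulAut.mul_apply, ← map_mul, inv_mul_cancel, map_one, MulAut.one_apply]⟩
    map_one' := Units.ext (by show Additive.ofMul (φ (1 : P) k₀) = Additive.ofMul k₀; rw [map_one]; rfl)
    map_mul' := fun p q => Units.ext (by
      show Additive.ofMul (φ (p * q) k₀) = Additive.ofMul (fmul (φ p k₀) (φ q k₀))
      rw [hmulP, map_mul, MulAut.mul_apply]) }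
  let θ₀ : P →* (GaloisField 2 n)ˣ :=
    (Units.mapEquiv E.toMulEquiv).toMonoidHom.comp uP
  have hθinj : Function.Injective θ₀ := by
    intro p q h
    have h2 : uP p = uP q := (Units.mapEquiv E.toMulEquiv).injective h
    have h3 : Additive.ofMul (φ p k₀) = Additive.ofMul (φ q k₀) := congrArg Units.val h2
    exact hfinj p q h3
  have hcardGF : Fintype.card (GaloisField 2 n) = 2 ^ n := by
    have h := GaloisField.card (p := 2) (n := n) (by omega)
    rwa [Nat.card_eq_fintype_card] at h
  have hθbij : Function.Bijective θ₀ := by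
    rw [Fintype.bijective_iff_injective_and_card]
    refine ⟨hθinj, ?_⟩
    rw [hP, Fintype.card_units, hcardGF]
  let θ : P ≃* (GaloisField 2 n)ˣ := MulEquiv.ofBijective θ₀ hθbij
  -- equivariance
  have hequiv : ∀ (p : P) (k : K), aglAction n (θ₀ p) (ψ k) = ψ (φ p k) := by
    intro p k
    show Multiplicative.ofAdd ((θ₀ p : GaloisField 2 n) * E (Additive.ofMul k))
      = Multiplicative.ofAdd (E (Additive.ofMul (φ p k)))
    congr 1
    have hval : (θ₀ p : GaloisField 2 n) = E (Additive.ofMul (φ p k₀)) := rfl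
    rw [hval, ← map_mul]
    congr 1
    show Additive.ofMul (fmul (φ p k₀) k) = Additive.ofMul (φ p k)
    rw [hmulP]
  exact ⟨{
    toFun := fun g => ⟨ψ g.left, θ g.right⟩
    invFun := fun g => ⟨ψ.symm g.left, θ.symm g.right⟩
    left_inv := fun g => by
      refine SemidirectProduct.ext ?_ ?_
      · show ψ.symm (ψ g.left) = g.left
        exact ψ.symm_apply_apply g.left
      · show θ.symm (θ g.right) = g.right
        exact θ.symm_apply_apply g.right
    right_inv := fun g => by
      refine SemidirectProduct.ext ?_ ?_
      · show ψ (ψ.symm g.left) = g.left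
        exact ψ.apply_symm_apply g.left
      · show θ (θ.symm g.right) = g.right
        exact θ.apply_symm_apply g.right
    map_mul' := fun g h => by
      refine SemidirectProduct.ext ?_ (map_mul θ g.right h.right)
      show ψ (g.left * φ g.right h.left) = ψ g.left * aglAction n (θ g.right) (ψ h.left)
      rw [map_mul ψ]
      exact congrArg (ψ g.left * ·) (hequiv g.right h.left).symm }⟩
end

section
/- Any cyclic subgroup of GL(n, 𝔽₂) of order 2^n − 1 acts transitively on the nonzero vectors of 𝔽₂^n. -/
set_option maxHeartbeats 1000000

theorem singer_cycle_transitive (n : ℕ)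
    (S : Subgroup (Matrix.GeneralLinearGroup (Fin n) (ZMod 2)))
    (hcyc : IsCyclic S) (hcard : Nat.card S = 2 ^ n - 1) :
    ∀ v w : Fin n → ZMod 2, v ≠ 0 → w ≠ 0 →
      ∃ g ∈ S, (g : Matrix (Fin n) (Fin n) (ZMod 2)).mulVec v = w := by
  intro v w hv hw
  rcases Nat.eq_zero_or_pos n with hn | hn
  · subst hn; exact absurd (Subsingleton.elim v 0) hv
  set N : ℕ := 2 ^ n - 1 with hNdef
  have hN1 : N + 1 = 2 ^ n := Nat.succ_pred_eq_of_pos (pow_pos two_pos n)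
  have hNpos : 0 < N := by
    have : 2 ≤ 2 ^ n := Nat.one_lt_two_pow (by omega)
    omega
  -- generator
  obtain ⟨y, hy⟩ := hcyc.exists_generator
  have hyt : Subgroup.zpowers y = ⊤ := by
    rw [Subgroup.eq_top_iff']; exact hy
  have horder_y : orderOf y = N := by
    rw [← Nat.card_zpowers, hyt, ← hcard]
    exact Nat.card_congr Subgroup.topEquiv.toEquiv
  set g0 : Matrix.GeneralLinearGroup (Fin n) (ZMod 2) := ↑y with hg0
  have horder_g0 : orderOf g0 = N := by
    rw [← horder_y]
    exact orderOf_injective S.subtype Subtype.coe_injective y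
  set M : Matrix (Fin n) (Fin n) (ZMod 2) := (g0 : Matrix (Fin n) (Fin n) (ZMod 2)) with hM
  have horder_M : orderOf M = N := by
    rw [← horder_g0]
    exact orderOf_injective (Units.coeHom _) (fun _ _ h => Units.ext h) g0
  -- minimal polynomial
  have hint : IsIntegral (ZMod 2) M := IsIntegral.of_finite _ _
  set m : Polynomial (ZMod 2) := minpoly (ZMod 2) M with hm
  have hm0 : m ≠ 0 := minpoly.ne_zero hint
  have hdeg : m.natDegree ≤ n := by
    have h1 : m ∣ M.charpoly := Matrix.minpoly_dvd_charpoly M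
    have h2 : M.charpoly.natDegree = n := by
      rw [Matrix.charpoly_natDegree_eq_dim, Fintype.card_fin]
    rw [← h2]
    exact Polynomial.natDegree_le_of_dvd h1 (M.charpoly_monic).ne_zero
  -- adjoin root
  set R := AdjoinRoot m with hR
  have haev : Polynomial.aeval M m = 0 := minpoly.aeval _ _
  have hspan : ∀ p ∈ Ideal.span ({m} : Set (Polynomial (ZMod 2))),
      Polynomial.aeval M p = 0 := by
    intro p hp
    rw [Ideal.mem_span_singleton] at hp
    obtain ⟨q, rfl⟩ := hp
    rw [map_mul, haev, zero_mul]
  set φ : R →+* Matrix (Fin n) (Fin n) (ZMod 2) :=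
    Ideal.Quotient.lift (Ideal.span ({m} : Set (Polynomial (ZMod 2))))
      (Polynomial.aeval M).toRingHom hspan with hφ
  have hφmk : ∀ p : Polynomial (ZMod 2), φ (AdjoinRoot.mk m p) = Polynomial.aeval M p := by
    intro p
    rfl
  have hφinj : Function.Injective φ := by
    rw [injective_iff_map_eq_zero]
    intro a ha
    obtain ⟨p, rfl⟩ := AdjoinRoot.mk_surjective a
    rw [AdjoinRoot.mk_eq_zero]
    exact minpoly.dvd _ _ (by rwa [hφmk] at ha)
  set x : R := AdjoinRoot.root m with hx
  have hφx : φ x = M := by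
    rw [hx, AdjoinRoot.root, hφmk, Polynomial.aeval_X]
  have horder_x : orderOf x = N := by
    rw [← horder_M, ← hφx]
    exact (orderOf_injective φ.toMonoidHom hφinj x).symm
  -- cardinality of R
  let pb := AdjoinRoot.powerBasis hm0
  let e := pb.basis.equivFun
  haveI : Finite R := Finite.of_equiv _ e.toEquiv.symm
  haveI : Fintype R := Fintype.ofFinite R
  have hcardR : Fintype.card R = 2 ^ pb.dim := by
    rw [Fintype.card_congr e.toEquiv]
    simp
  have hdim : pb.dim = m.natDegree := rfl
  -- units
  have hxN : x ^ N = 1 := by rw [← horder_x]; exact pow_orderOf_eq_one x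
  set u : Rˣ := Units.ofPowEqOne x N hxN hNpos.ne' with hu
  have huval : (u : R) = x := rfl
  have hxu : ∀ i : ℕ, x ^ i = ((u ^ i : Rˣ) : R) := by
    intro i; rw [Units.val_pow_eq_pow_val, huval]
  have horder_u : orderOf u = N := by
    rw [← horder_x, ← huval, orderOf_units]
  -- the finset of powers plus zero
  classical
  set F : Finset R := insert 0 ((Finset.range N).image (x ^ ·)) with hF
  have hinjOn : Set.InjOn (x ^ ·) (Set.Iio N) := by
    intro i hi j hj hij
    have : (u ^ ·) i = (u ^ ·) j := by
      apply Units.ext; simpa [← hxu] using hij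
    exact pow_injOn_Iio_orderOf (by simpa [horder_u] using hi)
      (by simpa [horder_u] using hj) this
  haveI : Nonempty (Fin n) := Fin.pos_iff_nonempty.mp hn
  haveI hNontriv : Nontrivial R := by
    have : 1 ≤ m.natDegree := minpoly.natDegree_pos hint
    have h2 : 2 ≤ Fintype.card R := by
      rw [hcardR, hdim]
      calc 2 = 2 ^ 1 := rfl
        _ ≤ 2 ^ m.natDegree := Nat.pow_le_pow_right (by norm_num) this
    exact Fintype.one_lt_card_iff_nontrivial.mp (by omega)
  have h0notmem : (0 : R) ∉ (Finset.range N).image (x ^ ·) := by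
    intro hmem
    obtain ⟨i, _, h0⟩ := Finset.mem_image.mp hmem
    have hu' : IsUnit (x ^ i) := by rw [hxu]; exact (u ^ i).isUnit
    exact hu'.ne_zero h0
  have hcardF : F.card = N + 1 := by
    rw [hF, Finset.card_insert_of_notMem h0notmem,
      Finset.card_image_of_injOn (by
        intro a ha b hb hab
        exact hinjOn (by simpa using ha) (by simpa using hb) hab),
      Finset.card_range]
  have hcard_le : Fintype.card R ≤ 2 ^ n := by
    rw [hcardR, hdim]; exact Nat.pow_le_pow_right (by norm_num) hdeg
  have hFuniv : F = Finset.univ := by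
    apply Finset.eq_univ_of_card
    have := F.card_le_univ
    omega
  -- every nonzero element of R is a power of x
  have hpow : ∀ r : R, r ≠ 0 → ∃ i : ℕ, x ^ i = r := by
    intro r hr
    have : r ∈ F := by rw [hFuniv]; exact Finset.mem_univ r
    rw [hF, Finset.mem_insert] at this
    rcases this with h | h
    · exact absurd h hr
    · obtain ⟨i, _, hi⟩ := Finset.mem_image.mp h
      exact ⟨i, hi⟩
  -- the evaluation map
  set ψ : R → (Fin n → ZMod 2) := fun r => (φ r).mulVec v with hψ
  have hMi : ∀ i : ℕ, (M ^ i).mulVec v ≠ 0 := by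
    intro i hcon
    apply hv
    have : ((g0 ^ i : _ˣ) : Matrix (Fin n) (Fin n) (ZMod 2)) = M ^ i :=
      Units.val_pow_eq_pow_val g0 i
    have h1 : (((g0 ^ i)⁻¹ : _ˣ) : Matrix (Fin n) (Fin n) (ZMod 2)).mulVec
        ((M ^ i).mulVec v) = v := by
      rw [Matrix.mulVec_mulVec, ← this, Units.inv_mul, Matrix.one_mulVec]
    rw [hcon, Matrix.mulVec_zero] at h1
    exact h1.symm
  have hψinj : Function.Injective ψ := by
    intro r1 r2 h12
    by_contra hne
    have hr : r1 - r2 ≠ 0 := sub_ne_zero.mpr hne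
    obtain ⟨i, hi⟩ := hpow _ hr
    have : (φ (r1 - r2)).mulVec v = 0 := by
      rw [map_sub, Matrix.sub_mulVec]
      rw [hψ] at h12
      simpa [sub_eq_zero] using h12
    rw [← hi, map_pow, hφx] at this
    exact hMi i this
  have hcardV : Fintype.card R = Fintype.card (Fin n → ZMod 2) := by
    have h1 : Fintype.card (Fin n → ZMod 2) = 2 ^ n := by simp
    have h2 : N + 1 ≤ Fintype.card R := by
      calc N + 1 = F.card := hcardF.symm
        _ ≤ _ := F.card_le_univ
    omega
  have hψsurj : Function.Surjective ψ :=
    ((Fintype.bijective_iff_injective_and_card ψ).mpr ⟨hψinj, hcardV⟩).2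
  obtain ⟨r, hr⟩ := hψsurj w
  have hrne : r ≠ 0 := by
    rintro rfl
    rw [hψ] at hr
    simp only [map_zero, Matrix.zero_mulVec] at hr
    exact hw hr.symm
  obtain ⟨i, hi⟩ := hpow r hrne
  refine ⟨((y ^ i : S) : _), (y ^ i).2, ?_⟩
  have hcoe : (((y ^ i : S) : Matrix.GeneralLinearGroup (Fin n) (ZMod 2)) :
      Matrix (Fin n) (Fin n) (ZMod 2)) = M ^ i := by
    push_cast
    exact Units.val_pow_eq_pow_val g0 i
  rw [hcoe]
  have hr2 : (φ r).mulVec v = w := hr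
  rw [← hi, map_pow, hφx] at hr2
  exact hr2
end
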